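/- Let R^(0), R^(1), ..., R^(K) be exchangeable real-valued random variables on a common probability space (i.e., the joint distribution of (R^(0),...,R^(K)) is invariant under every permutation of the indices {0,...,K}). Let δ̄ ∈ (0,1), set p := ⌈(K+1)(1−δ̄)⌉, and let C be the p-th smallest element of the list (R^(1),...,R^(K),+∞) of extended reals. Then P(R^(0) ≤ C) ≥ p/(K+1) ≥ 1 − δ̄. -/

import Mathlib

open MeasureTheory

/-- The `p`-th smallest element (1-indexed) of the list consisting of the `K` extended-real
scores `R 1, ..., R K` together with `+∞`. -/
noncomputable def conformalBound (K : ℕ) (R : Fin K → EReal) (p : ℕ) : EReal :=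
  (@List.insertionSort EReal (· ≤ ·) (Classical.decRel _)
    (((List.finRange K).map R) ++ [⊤])).getD (p - 1) ⊤

lemma sorted_le_get_iff {l : List EReal} (hs : l.Pairwise (· ≤ ·)) {j : ℕ} (hj : j < l.length)
    (x : EReal) : x ≤ l.get ⟨j, hj⟩ ↔ l.countP (fun y => decide (y < x)) ≤ j := by
  constructor
  · intro hx
    have hsplit := List.take_append_drop j l
    have h1 : l.countP (fun y => decide (y < x)) =
        (l.take j).countP (fun y => decide (y < x)) + (l.drop j).countP (fun y => decide (y < x)) := by
      conv_lhs => rw [← hsplit]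
      rw [List.countP_append]
    have h2 : (l.drop j).countP (fun y => decide (y < x)) = 0 := by
      rw [List.countP_eq_zero]
      intro a ha
      obtain ⟨m, hm⟩ := List.get_of_mem ha
      have : a = l.get ⟨j + m.1, by have := m.2; simp [List.length_drop] at this; omega⟩ := by
        rw [← hm]; simp [List.getElem_drop]
      subst this
      simp only [decide_eq_true_eq, not_lt]
      refine le_trans hx ?_
      exact hs.rel_get_of_le (by simp [Fin.le_def])
    have h3 : (l.take j).countP (fun y => decide (y < x)) ≤ j :=
      le_trans List.countP_le_length (by simp)
    omega
  · intro hc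
    by_contra hx
    push_neg at hx
    have hall : ∀ a ∈ l.take (j+1), (fun y => decide (y < x)) a = true := by
      intro a ha
      obtain ⟨m, hm⟩ := List.get_of_mem ha
      have hmlt : m.1 < j + 1 := by have := m.2; simp [List.length_take] at this; omega
      have : a = l.get ⟨m.1, by omega⟩ := by rw [← hm]; simp [List.getElem_take]
      subst this
      simp only [decide_eq_true_eq]
      exact lt_of_le_of_lt (hs.rel_get_of_le (by simp [Fin.le_def]; omega)) hx
    have h4 : (l.take (j+1)).countP (fun y => decide (y < x)) = j + 1 := by
      rw [List.countP_eq_length.mpr hall, List.length_take]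
      omega
    have h5 : (l.take (j+1)).countP (fun y => decide (y < x)) ≤ l.countP (fun y => decide (y < x)) := by
      conv_rhs => rw [← List.take_append_drop (j+1) l]
      rw [List.countP_append]; omega
    omega

lemma le_conformalBound_iff (K p : ℕ) (hp1 : 1 ≤ p) (hpK : p ≤ K + 1)
    (f : Fin K → ℝ) (x : ℝ) :
    ((x : EReal) ≤ conformalBound K (fun i => ((f i : ℝ) : EReal)) p) ↔
      (Finset.univ.filter fun i => f i < x).card < p := by
  set L : List EReal := ((List.finRange K).map (fun i => ((f i : ℝ) : EReal))) ++ [⊤] with hL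
  set s := @List.insertionSort EReal (· ≤ ·) (Classical.decRel _) L with hs
  have hperm : List.Perm s L := @List.perm_insertionSort EReal (· ≤ ·) (Classical.decRel _) L
  have hlen : s.length = K + 1 := by
    rw [hperm.length_eq, hL]; simp
  have hsorted : s.Pairwise (· ≤ ·) :=
    @List.pairwise_insertionSort EReal (· ≤ ·) (Classical.decRel _) _ _ L
  have hjlt : p - 1 < s.length := by omega
  have hgetD : conformalBound K (fun i => ((f i : ℝ) : EReal)) p = s.get ⟨p - 1, hjlt⟩ := by
    rw [conformalBound, ← hs, List.getD_eq_getElem _ _ hjlt]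
    simp
  rw [hgetD, sorted_le_get_iff hsorted hjlt]
  have hcount : s.countP (fun y => decide (y < (x : EReal))) =
      (Finset.univ.filter fun i => f i < x).card := by
    rw [hperm.countP_eq, hL, List.countP_append, List.countP_map]
    have h1 : ([⊤] : List EReal).countP (fun y => decide (y < (x : EReal))) = 0 := by
      simp [List.countP_cons, not_top_lt]
    rw [h1, Nat.add_zero]
    have h2 : ((fun y => decide (y < (x : EReal))) ∘ (fun i => ((f i : ℝ) : EReal))) =
        fun i => decide (f i < x) := by
      funext i; simp [EReal.coe_lt_coe_iff]
    rw [h2, List.countP_eq_length_filter]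
    rfl
  rw [hcount]
  omega

lemma rank_pigeonhole {n : ℕ} (v : Fin n → ℝ) (p : ℕ) (hp : p ≤ n) :
    p ≤ (Finset.univ.filter fun j => (Finset.univ.filter fun i => v i < v j).card < p).card := by
  set σ := Tuple.sort v with hσ
  have hmono : Monotone (v ∘ σ) := Tuple.monotone_sort v
  have hmem : ∀ m : Fin p, σ (Fin.castLE hp m) ∈
      (Finset.univ.filter fun j => (Finset.univ.filter fun i => v i < v j).card < p) := by
    intro m
    simp only [Finset.mem_filter, Finset.mem_univ, true_and]
    set j := σ (Fin.castLE hp m) with hj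
    have himg : (Finset.univ.filter fun i => v i < v j) =
        (Finset.univ.filter fun l => v (σ l) < v j).map σ.toEmbedding := by
      ext i
      simp only [Finset.mem_filter, Finset.mem_univ, true_and, Finset.mem_map,
        Equiv.coe_toEmbedding]
      constructor
      · intro h; exact ⟨σ.symm i, by simpa using h, by simp⟩
      · rintro ⟨l, hl, rfl⟩; exact hl
    rw [himg, Finset.card_map]
    have hsub : (Finset.univ.filter fun l => v (σ l) < v j) ⊆ Finset.Iio (Fin.castLE hp m) := by
      intro l hl
      simp only [Finset.mem_filter, Finset.mem_univ, true_and] at hl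
      simp only [Finset.mem_Iio]
      by_contra hge
      push_neg at hge
      exact absurd (hmono hge) (not_le.mpr hl)
    calc (Finset.univ.filter fun l => v (σ l) < v j).card
        ≤ (Finset.Iio (Fin.castLE hp m)).card := Finset.card_le_card hsub
      _ = (Fin.castLE hp m : ℕ) := by simp [Fin.card_Iio]
      _ < p := m.2
  have hinj : Set.InjOn (fun m : Fin p => σ (Fin.castLE hp m))
      (Finset.univ : Finset (Fin p)) := by
    intro a _ b _ hab
    have := σ.injective hab
    exact Fin.castLE_injective hp this
  calc p = (Finset.univ : Finset (Fin p)).card := (Finset.card_fin p).symm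
    _ ≤ _ := Finset.card_le_card_of_injOn _ (fun m _ => hmem m) hinj

lemma card_filter_comp_perm {n : ℕ} (u : Fin n → ℝ) (σ : Equiv.Perm (Fin n)) (c : ℝ) :
    (Finset.univ.filter fun l => u (σ l) < c).card
      = (Finset.univ.filter fun i => u i < c).card := by
  rw [show (Finset.univ.filter fun i => u i < c)
      = (Finset.univ.filter fun l => u (σ l) < c).map σ.toEmbedding from ?_, Finset.card_map]
  ext i
  simp only [Finset.mem_filter, Finset.mem_univ, true_and, Finset.mem_map,
    Equiv.coe_toEmbedding]
  constructor
  · intro h; exact ⟨σ.symm i, by simpa using h, by simp⟩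
  · rintro ⟨l, hl, rfl⟩; exact hl

lemma card_filter_succ {K : ℕ} (w : Fin (K + 1) → ℝ) :
    (Finset.univ.filter fun i : Fin (K + 1) => w i < w 0).card
      = (Finset.univ.filter fun i : Fin K => w i.succ < w 0).card := by
  rw [show (Finset.univ.filter fun i : Fin (K + 1) => w i < w 0)
      = (Finset.univ.filter fun i : Fin K => w i.succ < w 0).map
          ⟨Fin.succ, Fin.succ_injective K⟩ from ?_, Finset.card_map]
  ext i
  simp only [Finset.mem_filter, Finset.mem_univ, true_and, Finset.mem_map,
    Function.Embedding.coeFn_mk]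
  constructor
  · intro h
    rcases Fin.eq_zero_or_eq_succ i with rfl | ⟨l, rfl⟩
    · exact absurd h (lt_irrefl _)
    · exact ⟨l, h, rfl⟩
  · rintro ⟨l, hl, rfl⟩; exact hl

/-- **Conformal prediction coverage (quantile lemma).**
If `R 0, ..., R K` are exchangeable real random variables, `δ̄ ∈ (0,1)`,
`p = ⌈(K+1)(1-δ̄)⌉`, and `C` is the `p`-th smallest element of the list
`(R 1, ..., R K, +∞)`, then `P(R 0 ≤ C) ≥ p/(K+1) ≥ 1 - δ̄`. -/
theorem conformal_coverage
    {Ω : Type*} [MeasurableSpace Ω] (μ : Measure Ω) [IsProbabilityMeasure μ]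
    (K : ℕ) (R : Fin (K + 1) → Ω → ℝ)
    (hmeas : ∀ i, Measurable (R i))
    (hexch : ∀ σ : Equiv.Perm (Fin (K + 1)),
      Measure.map (fun ω => fun i => R (σ i) ω) μ = Measure.map (fun ω => fun i => R i ω) μ)
    (δ : ℝ) (hδ : δ ∈ Set.Ioo (0 : ℝ) 1)
    (p : ℕ) (hp : p = ⌈((K : ℝ) + 1) * (1 - δ)⌉₊)
    (C : Ω → EReal)
    (hC : ∀ ω, C ω = conformalBound K (fun i => ((R i.succ ω : ℝ) : EReal)) p) :
    ENNReal.ofReal ((p : ℝ) / ((K : ℝ) + 1)) ≤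
        μ {ω | ((R 0 ω : ℝ) : EReal) ≤ C ω} ∧
      1 - δ ≤ (p : ℝ) / ((K : ℝ) + 1) := by
  classical
  obtain ⟨hδ0, hδ1⟩ := hδ
  have hKpos : (0 : ℝ) < (K : ℝ) + 1 := by positivity
  have hprod_pos : (0 : ℝ) < ((K : ℝ) + 1) * (1 - δ) := by
    apply mul_pos hKpos; linarith
  have hp1 : 1 ≤ p := by
    rw [hp]
    exact Nat.one_le_iff_ne_zero.mpr (by positivity)
  have hpK : p ≤ K + 1 := by
    rw [hp]
    apply Nat.ceil_le.mpr
    have : ((K : ℝ) + 1) * (1 - δ) ≤ (K : ℝ) + 1 := by nlinarith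
    calc ((K : ℝ) + 1) * (1 - δ) ≤ (K : ℝ) + 1 := this
      _ = ((K + 1 : ℕ) : ℝ) := by push_cast; ring
  -- second conjunct
  have hsecond : 1 - δ ≤ (p : ℝ) / ((K : ℝ) + 1) := by
    rw [le_div_iff₀ hKpos]
    have := Nat.le_ceil (((K : ℝ) + 1) * (1 - δ))
    rw [← hp] at this
    linarith
  refine ⟨?_, hsecond⟩
  -- the main coverage bound
  set v : Ω → Fin (K + 1) → ℝ := fun ω i => R i ω with hv_def
  have hv : Measurable v := measurable_pi_lambda _ hmeas
  set B : Fin (K + 1) → Set (Fin (K + 1) → ℝ) :=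
    fun j => {u | (Finset.univ.filter fun i => u i < u j).card < p} with hB_def
  have hB : ∀ j, MeasurableSet (B j) := by
    intro j
    have hm : Measurable (fun u : Fin (K + 1) → ℝ =>
        (Finset.univ.filter fun i => u i < u j).card) := by
      have heq : (fun u : Fin (K + 1) → ℝ => (Finset.univ.filter fun i => u i < u j).card)
          = fun u => ∑ i, if u i < u j then 1 else 0 := by
        funext u; rw [Finset.card_filter]
      rw [heq]
      exact Finset.measurable_sum _ fun i _ =>
        Measurable.ite (measurableSet_lt (measurable_pi_apply i) (measurable_pi_apply j))
          measurable_const measurable_const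
    exact hm (MeasurableSet.of_discrete (s := {k | k < p}))
  set A : Fin (K + 1) → Set Ω := fun j => v ⁻¹' B j with hA_def
  have hA : ∀ j, MeasurableSet (A j) := fun j => hv (hB j)
  -- identify the event with A 0
  have hset : {ω | ((R 0 ω : ℝ) : EReal) ≤ C ω} = A 0 := by
    ext ω
    simp only [Set.mem_setOf_eq, hA_def, Set.mem_preimage, hB_def]
    rw [hC ω, le_conformalBound_iff K p hp1 hpK]
    rw [card_filter_succ (v ω)]
  -- the pushforward measure
  set ν : Measure (Fin (K + 1) → ℝ) := Measure.map v μ with hν_def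
  have hνA : ∀ j, μ (A j) = ν (B j) := fun j => (Measure.map_apply hv (hB j)).symm
  have hsame : ∀ j, ν (B j) = ν (B 0) := by
    intro j
    set σ : Equiv.Perm (Fin (K + 1)) := Equiv.swap 0 j with hσ_def
    have hσ0 : σ 0 = j := Equiv.swap_apply_left 0 j
    have hcomp : Measurable fun u : Fin (K + 1) → ℝ => u ∘ σ :=
      measurable_pi_lambda _ fun l => measurable_pi_apply (σ l)
    have hBpre : B j = (fun u : Fin (K + 1) → ℝ => u ∘ σ) ⁻¹' B 0 := by
      ext u
      simp only [hB_def, Set.mem_setOf_eq, Set.mem_preimage, Function.comp_apply]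
      rw [card_filter_comp_perm u σ (u (σ 0))]
      simp only [hσ0]
    have hmap : Measure.map (fun u : Fin (K + 1) → ℝ => u ∘ σ) ν = ν := by
      rw [hν_def, Measure.map_map hcomp hv]
      have : ((fun u : Fin (K + 1) → ℝ => u ∘ σ) ∘ v) = fun ω => fun i => R (σ i) ω := rfl
      rw [this, hexch σ]
    calc ν (B j) = ν ((fun u : Fin (K + 1) → ℝ => u ∘ σ) ⁻¹' B 0) := by rw [← hBpre]
      _ = (Measure.map (fun u : Fin (K + 1) → ℝ => u ∘ σ) ν) (B 0) :=
          (Measure.map_apply hcomp (hB 0)).symm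
      _ = ν (B 0) := by rw [hmap]
  -- pointwise counting bound
  have hkey : ∀ ω, (p : ENNReal) ≤ ∑ j, (A j).indicator (fun _ => (1 : ENNReal)) ω := by
    intro ω
    have hsum : ∑ j, (A j).indicator (fun _ => (1 : ENNReal)) ω
        = ((Finset.univ.filter fun j => ω ∈ A j).card : ENNReal) := by
      rw [Finset.card_filter]
      push_cast
      refine Finset.sum_congr rfl fun j _ => ?_
      by_cases h : ω ∈ A j <;> simp [Set.indicator_apply, h]
    rw [hsum]
    have hfilter : (Finset.univ.filter fun j => ω ∈ A j)
        = (Finset.univ.filter fun j =>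
            (Finset.univ.filter fun i => v ω i < v ω j).card < p) := by
      apply Finset.filter_congr
      intro j _
      simp [hA_def, hB_def]
    rw [hfilter]
    exact_mod_cast rank_pigeonhole (v ω) p hpK
  -- integrate
  have hsum_meas : ∀ j, Measurable ((A j).indicator (fun _ => (1 : ENNReal))) := fun j =>
    measurable_const.indicator (hA j)
  have hint : (p : ENNReal) ≤ ∑ j, μ (A j) := by
    calc (p : ENNReal) = ∫⁻ _, (p : ENNReal) ∂μ := by simp
      _ ≤ ∫⁻ ω, ∑ j, (A j).indicator (fun _ => (1 : ENNReal)) ω ∂μ := lintegral_mono hkey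
      _ = ∑ j, ∫⁻ ω, (A j).indicator (fun _ => (1 : ENNReal)) ω ∂μ :=
          lintegral_finset_sum _ fun j _ => hsum_meas j
      _ = ∑ j, μ (A j) := by
          refine Finset.sum_congr rfl fun j _ => ?_
          rw [lintegral_indicator (hA j)]
          simp
  have htotal : (p : ENNReal) ≤ ((K : ENNReal) + 1) * ν (B 0) := by
    have : ∑ j, μ (A j) = ((K : ENNReal) + 1) * ν (B 0) := by
      calc ∑ j, μ (A j) = ∑ _j : Fin (K + 1), ν (B 0) := by
            refine Finset.sum_congr rfl fun j _ => ?_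
            rw [hνA j, hsame j]
        _ = ((K + 1 : ℕ) : ENNReal) * ν (B 0) := by
            rw [Finset.sum_const, Finset.card_fin, nsmul_eq_mul]
        _ = ((K : ENNReal) + 1) * ν (B 0) := by push_cast; ring
    rw [← this]; exact hint
  have hdiv : (p : ENNReal) / ((K : ENNReal) + 1) ≤ ν (B 0) :=
    ENNReal.div_le_of_le_mul' htotal
  have hofReal : ENNReal.ofReal ((p : ℝ) / ((K : ℝ) + 1)) = (p : ENNReal) / ((K : ENNReal) + 1) := by
    rw [ENNReal.ofReal_div_of_pos hKpos]
    congr 1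
    · exact ENNReal.ofReal_natCast p
    · rw [show ((K : ℝ) + 1) = ((K + 1 : ℕ) : ℝ) by push_cast; ring, ENNReal.ofReal_natCast]
      push_cast; ring
  rw [hset, hνA 0, hofReal]
  exact hdiv
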